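/- Let a > 0 and b > 0 and let u : ℝ² → ℝ be four times continuously differentiable on a neighborhood of the rectangle R = [0,a] × [0,b], with u(x,y) = 0 whenever (x,y) lies on the boundary ∂R. Then there exists a constant C > 0, depending only on u, a, and b, such that for all positive integers N, M, setting h = a/N and assuming b/h = M (so the grid is uniform with mesh size h in both directions), the composite two-dimensional trapezoidal approximation T_h = h² · Σ_{i=1}^{N-1} Σ_{j=1}^{M-1} u(ih, jh)² of ∫_R u² satisfies |∫_R u(x,y)² dx dy − T_h| ≤ C·h³. -/

import Mathlib

open MeasureTheory Set Finset

open intervalIntegral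
/-- Single-cell trapezoid error with second-order correction term. -/
lemma trap_cell (g g1 g2 g3 : ℝ → ℝ) (c h K : ℝ) (hh : 0 < h)
    (hg : ∀ x ∈ Icc c (c+h), HasDerivAt g (g1 x) x)
    (hg1 : ∀ x ∈ Icc c (c+h), HasDerivAt g1 (g2 x) x)
    (hg2 : ∀ x ∈ Icc c (c+h), HasDerivAt g2 (g3 x) x)
    (hK : ∀ x ∈ Icc c (c+h), |g3 x| ≤ K) :
    |(∫ x in c..(c+h), g x) - h/2 * (g c + g (c+h))
        + h^2/12 * (g1 (c+h) - g1 c)| ≤ K * h^4 / 12 := by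
  have hcc : c ≤ c + h := by linarith
  have huIcc : uIcc c (c+h) = Icc c (c+h) := uIcc_of_le hcc
  have hK0 : 0 ≤ K := le_trans (abs_nonneg _) (hK c (by constructor <;> linarith))
  -- continuity of g, g1, g2 on the cell
  have cg : ContinuousOn g (Icc c (c+h)) :=
    fun x hx => (hg x hx).continuousAt.continuousWithinAt
  have cg1 : ContinuousOn g1 (Icc c (c+h)) :=
    fun x hx => (hg1 x hx).continuousAt.continuousWithinAt
  have cg2 : ContinuousOn g2 (Icc c (c+h)) :=
    fun x hx => (hg2 x hx).continuousAt.continuousWithinAt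
  have ig : IntervalIntegrable g volume c (c+h) :=
    (cg.mono (by rw [huIcc])).intervalIntegrable
  have ig1 : IntervalIntegrable g1 volume c (c+h) :=
    (cg1.mono (by rw [huIcc])).intervalIntegrable
  have ig2 : IntervalIntegrable g2 volume c (c+h) :=
    (cg2.mono (by rw [huIcc])).intervalIntegrable
  -- P and its derivative
  set P : ℝ → ℝ := fun x => (x - c) * (c + h - x) / 2 with hPdef
  set P1 : ℝ → ℝ := fun x => c + h/2 - x with hP1def
  have hP : ∀ x : ℝ, HasDerivAt P (P1 x) x := by
    intro x
    have : HasDerivAt (fun x : ℝ => (x - c) * (c + h - x) / 2)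
        ((1 * (c + h - x) + (x - c) * (0 - 1)) / 2) x := by
      exact (((hasDerivAt_id x).sub_const c).mul
        ((hasDerivAt_const x (c+h)).sub (hasDerivAt_id x))).div_const 2
    convert this using 1
    simp [hP1def]; ring
  have hP1 : ∀ x : ℝ, HasDerivAt P1 (-1) x := by
    intro x
    have : HasDerivAt (fun x : ℝ => c + h/2 - x) (0 - 1) x :=
      (hasDerivAt_const x (c + h/2)).sub (hasDerivAt_id x)
    simpa using this
  have iP1 : IntervalIntegrable P1 volume c (c+h) :=
    (Continuous.continuousOn (by continuity)).intervalIntegrable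
  -- IBP 1 : ∫ P * g2 = - ∫ P1 * g1
  have ibp1 : (∫ x in c..(c+h), P x * g2 x)
      = P (c+h) * g1 (c+h) - P c * g1 c - ∫ x in c..(c+h), P1 x * g1 x := by
    apply integral_mul_deriv_eq_deriv_mul
      (fun x hx => hP x) (fun x hx => hg1 x (by rwa [huIcc] at hx)) iP1 ig2
  -- IBP 2
  have ibp2 : (∫ x in c..(c+h), P1 x * g1 x)
      = P1 (c+h) * g (c+h) - P1 c * g c - ∫ x in c..(c+h), (-1) * g x := by
    apply integral_mul_deriv_eq_deriv_mul
      (fun x hx => hP1 x) (fun x hx => hg x (by rwa [huIcc] at hx))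
      ((continuous_const.intervalIntegrable _ _)) ig1
  -- FTC for g2
  have ftc : (∫ x in c..(c+h), g2 x) = g1 (c+h) - g1 c := by
    apply integral_eq_sub_of_hasDerivAt (fun x hx => hg1 x (by rwa [huIcc] at hx)) ig2
  -- ∫ P = h^3/12
  have intP : (∫ x in c..(c+h), P x) = h^3/12 := by
    have : ∀ x : ℝ, HasDerivAt (fun x => (h*(x-c)^2/2 - (x-c)^3/3)/2) (P x) x := by
      intro x
      have h1 : HasDerivAt (fun x : ℝ => (h*(x-c)^2/2 - (x-c)^3/3)/2)
          ((h*(2*(x-c)^1*1)/2 - (3*(x-c)^2*1)/3)/2) x := by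
        exact ((((((hasDerivAt_id x).sub_const c).pow 2).const_mul h).div_const 2).sub
          ((((hasDerivAt_id x).sub_const c).pow 3).div_const 3)).div_const 2
      convert h1 using 1
      simp [hPdef]; ring
    rw [integral_eq_sub_of_hasDerivAt (fun x _ => this x)
      ((Continuous.continuousOn (by fun_prop)).intervalIntegrable)]
    ring

  -- combine
  have hPm : ∀ x ∈ Icc c (c+h), |h^2/12 - P x| ≤ h^2/12 := by
    intro x hx
    have h1 : 0 ≤ (x - c) * (c + h - x) := by
      have := hx.1; have := hx.2; nlinarith
    have h2 : (x - c) * (c + h - x) ≤ h^2/4 := by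
      have := hx.1; have := hx.2; nlinarith [sq_nonneg (x - c - h/2)]
    rw [abs_le]; constructor <;> simp only [hPdef] <;> nlinarith
  have hg2d : ∀ x ∈ Icc c (c+h), |g2 x - g2 c| ≤ K * h := by
    intro x hx
    have := (convex_Icc c (c+h)).norm_image_sub_le_of_norm_hasDerivWithin_le
      (fun y hy => (hg2 y hy).hasDerivWithinAt) (fun y hy => hK y hy)
      (left_mem_Icc.2 hcc) hx
    rw [Real.norm_eq_abs, Real.norm_eq_abs] at this
    have hxc : |x - c| ≤ h := by
      rw [abs_of_nonneg (by linarith [hx.1])]; linarith [hx.2]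
    nlinarith
  -- integrabilities of products
  have cP : ContinuousOn P (uIcc c (c+h)) := Continuous.continuousOn (by fun_prop)
  have iPg2 : IntervalIntegrable (fun x => P x * g2 x) volume c (c+h) :=
    ig2.continuousOn_mul cP
  have iQg2 : IntervalIntegrable (fun x => h^2/12 * g2 x) volume c (c+h) :=
    ig2.continuousOn_mul continuousOn_const
  -- step 1: trapezoid error as ∫ P1 g1
  have e1 : (∫ x in c..(c+h), g x) - h/2 * (g c + g (c+h))
      = ∫ x in c..(c+h), P1 x * g1 x := by
    rw [ibp2]
    have : (∫ x in c..(c+h), (-1 : ℝ) * g x) = - ∫ x in c..(c+h), g x := by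
      simp [intervalIntegral.integral_neg, neg_one_mul]
    rw [this]
    simp only [hP1def]; ring
  -- step 2: rewrite as ∫ (h²/12 - P) g2
  have e2 : (∫ x in c..(c+h), g x) - h/2 * (g c + g (c+h))
      + h^2/12 * (g1 (c+h) - g1 c)
      = ∫ x in c..(c+h), (h^2/12 - P x) * g2 x := by
    have hP0 : P c = 0 := by simp [hPdef]
    have hPh : P (c+h) = 0 := by simp [hPdef]
    have i1 : (∫ x in c..(c+h), P1 x * g1 x) = - ∫ x in c..(c+h), P x * g2 x := by
      rw [ibp1, hP0, hPh]; ring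
    rw [e1, i1]
    have expand : (∫ x in c..(c+h), (h^2/12 - P x) * g2 x)
        = (∫ x in c..(c+h), h^2/12 * g2 x) - ∫ x in c..(c+h), P x * g2 x := by
      rw [← intervalIntegral.integral_sub iQg2 iPg2]; congr 1; ext x; ring
    rw [expand, intervalIntegral.integral_const_mul, ftc]; ring
  -- step 3: subtract mean of g2 and bound
  have iQ : IntervalIntegrable (fun x => h^2/12 - P x) volume c (c+h) :=
    Continuous.intervalIntegrable (by fun_prop) _ _
  have iP : IntervalIntegrable P volume c (c+h) :=
    Continuous.intervalIntegrable (by fun_prop) _ _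
  have intQ : (∫ x in c..(c+h), (h^2/12 - P x)) = 0 := by
    rw [intervalIntegral.integral_sub intervalIntegrable_const iP,
      intervalIntegral.integral_const, intP]
    rw [smul_eq_mul]; ring
  have iQg2' : IntervalIntegrable (fun x => (h^2/12 - P x) * g2 x) volume c (c+h) :=
    ig2.continuousOn_mul (Continuous.continuousOn (by fun_prop))
  have e3 : (∫ x in c..(c+h), (h^2/12 - P x) * g2 x)
      = ∫ x in c..(c+h), (h^2/12 - P x) * (g2 x - g2 c) := by
    have split : (∫ x in c..(c+h), (h^2/12 - P x) * (g2 x - g2 c))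
        = (∫ x in c..(c+h), (h^2/12 - P x) * g2 x)
          - g2 c * ∫ x in c..(c+h), (h^2/12 - P x) := by
      rw [← intervalIntegral.integral_const_mul,
        ← intervalIntegral.integral_sub iQg2' (iQ.const_mul (g2 c))]
      congr 1; ext x; ring
    rw [split, intQ]; ring
  rw [e2, e3]
  have bound : ∀ x ∈ Set.uIoc c (c+h), ‖(h^2/12 - P x) * (g2 x - g2 c)‖ ≤ h^2/12 * (K*h) := by
    intro x hx
    have hx' : x ∈ Icc c (c+h) := by
      rw [uIoc_of_le hcc] at hx; exact ⟨le_of_lt hx.1, hx.2⟩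
    rw [Real.norm_eq_abs, abs_mul]
    have b1 := hPm x hx'
    have b2 := hg2d x hx'
    have := abs_nonneg (g2 x - g2 c)
    nlinarith [abs_nonneg (h^2/12 - P x)]
  have := intervalIntegral.norm_integral_le_of_norm_le_const bound
  rw [Real.norm_eq_abs] at this
  have habs : |c + h - c| = h := by rw [abs_of_nonneg (by linarith)]; ring_nf
  rw [habs] at this
  calc |∫ x in c..(c+h), (h^2/12 - P x) * (g2 x - g2 c)| ≤ h^2/12 * (K*h) * h := this
    _ = K * h^4 / 12 := by ring

/-- Composite trapezoid rule: third-order accuracy when `g` and `g'` vanish at endpoints. -/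
lemma trap1d (g g1 g2 g3 : ℝ → ℝ) (L K : ℝ) (hL : 0 < L) (n : ℕ) (hn : 0 < n)
    (hg : ∀ x ∈ Icc (0:ℝ) L, HasDerivAt g (g1 x) x)
    (hg1 : ∀ x ∈ Icc (0:ℝ) L, HasDerivAt g1 (g2 x) x)
    (hg2 : ∀ x ∈ Icc (0:ℝ) L, HasDerivAt g2 (g3 x) x)
    (hK : ∀ x ∈ Icc (0:ℝ) L, |g3 x| ≤ K)
    (hg0 : g 0 = 0) (hgL : g L = 0) (h10 : g1 0 = 0) (h1L : g1 L = 0) :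
    |(∫ x in (0:ℝ)..L, g x) - (L/n) * ∑ k ∈ Finset.Ico 1 n, g (k * (L/n))|
      ≤ K * L * (L/n)^3 := by
  set h : ℝ := L / n with hdef
  have hn' : (0:ℝ) < n := by exact_mod_cast hn
  have hh : 0 < h := by positivity
  have hnh : (n:ℝ) * h = L := by rw [hdef]; field_simp
  have hK0 : 0 ≤ K := le_trans (abs_nonneg _) (hK 0 ⟨le_refl _, le_of_lt hL⟩)
  have hn1 : 1 ≤ n := hn
  -- cells inside [0, L]
  have hsub : ∀ k : ℕ, k < n → Icc ((k:ℝ)*h) ((k:ℝ)*h + h) ⊆ Icc (0:ℝ) L := by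
    intro k hk x hx
    have hk' : (k:ℝ) + 1 ≤ n := by exact_mod_cast hk
    have h1 : (0:ℝ) ≤ (k:ℝ)*h := by positivity
    have h2 : (k:ℝ)*h + h ≤ L := by nlinarith
    exact ⟨le_trans h1 hx.1, le_trans hx.2 h2⟩
  set E : ℕ → ℝ := fun k => (∫ x in ((k:ℝ)*h)..((k:ℝ)*h + h), g x)
      - h/2 * (g ((k:ℝ)*h) + g ((k:ℝ)*h + h))
      + h^2/12 * (g1 ((k:ℝ)*h + h) - g1 ((k:ℝ)*h)) with hEdef
  have hEbound : ∀ k : ℕ, k < n → |E k| ≤ K * h^4 / 12 := by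
    intro k hk
    exact trap_cell g g1 g2 g3 ((k:ℝ)*h) h K hh
      (fun x hx => hg x (hsub k hk hx)) (fun x hx => hg1 x (hsub k hk hx))
      (fun x hx => hg2 x (hsub k hk hx)) (fun x hx => hK x (hsub k hk hx))
  have cg : ContinuousOn g (Icc (0:ℝ) L) :=
    fun x hx => (hg x hx).continuousAt.continuousWithinAt
  have cast1 : ∀ k : ℕ, ((k+1 : ℕ):ℝ) * h = (k:ℝ)*h + h := by
    intro k; push_cast; ring
  have hzero : ((0:ℕ):ℝ) * h = 0 := by simp
  -- (a) adjacent intervals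
  have ha : ∑ k ∈ Finset.range n, (∫ x in ((k:ℝ)*h)..((k:ℝ)*h + h), g x)
      = ∫ x in (0:ℝ)..L, g x := by
    have key := intervalIntegral.sum_integral_adjacent_intervals
      (a := fun k : ℕ => (k:ℝ)*h) (n := n) (f := g) (μ := volume) ?_
    · rw [hzero, hnh] at key
      rw [← key]
      apply Finset.sum_congr rfl
      intro k _
      rw [cast1 k]
    · intro k hk
      apply ContinuousOn.intervalIntegrable
      apply cg.mono
      rw [cast1 k, Set.uIcc_of_le (by linarith)]
      exact hsub k hk
  -- (b) trapezoid sums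
  have s1 : ∑ k ∈ Finset.range n, g ((k:ℝ)*h) = ∑ k ∈ Finset.Ico 1 n, g ((k:ℝ)*h) := by
    rw [Finset.range_eq_Ico, Finset.sum_eq_sum_Ico_succ_bot hn]
    norm_num [hg0]
  have s2 : ∑ k ∈ Finset.range n, g ((k:ℝ)*h + h) = ∑ k ∈ Finset.Ico 1 n, g ((k:ℝ)*h) := by
    have r1 : ∑ k ∈ Finset.range n, g ((k:ℝ)*h + h)
        = ∑ k ∈ Finset.range n, g (((k+1:ℕ):ℝ) * h) := by
      apply Finset.sum_congr rfl
      intro k _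
      rw [cast1 k]
    have r2 : ∑ k ∈ Finset.Ico 1 (n+1), g ((k:ℝ)*h)
        = ∑ k ∈ Finset.range n, g (((k+1:ℕ):ℝ) * h) := by
      rw [Finset.sum_Ico_eq_sum_range]
      simp only [Nat.add_sub_cancel]
      apply Finset.sum_congr rfl
      intro k _
      norm_num [add_comm 1 k]
    have r3 : ∑ k ∈ Finset.Ico 1 (n+1), g ((k:ℝ)*h)
        = (∑ k ∈ Finset.Ico 1 n, g ((k:ℝ)*h)) + g ((n:ℝ)*h) := by
      rw [Finset.sum_Ico_succ_top hn1]
    rw [r1, ← r2, r3, hnh, hgL, add_zero]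
  have hb : ∑ k ∈ Finset.range n, h/2 * (g ((k:ℝ)*h) + g ((k:ℝ)*h + h))
      = h * ∑ k ∈ Finset.Ico 1 n, g ((k:ℝ)*h) := by
    have expand : ∑ k ∈ Finset.range n, h/2 * (g ((k:ℝ)*h) + g ((k:ℝ)*h + h))
        = h/2 * (∑ k ∈ Finset.range n, g ((k:ℝ)*h))
          + h/2 * (∑ k ∈ Finset.range n, g ((k:ℝ)*h + h)) := by
      simp only [mul_add, Finset.sum_add_distrib, Finset.mul_sum]
    rw [expand, s1, s2]; ring
  -- (c) telescoping
  have hc : ∑ k ∈ Finset.range n, h^2/12 * (g1 ((k:ℝ)*h + h) - g1 ((k:ℝ)*h)) = 0 := by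
    have r1 : ∑ k ∈ Finset.range n, h^2/12 * (g1 ((k:ℝ)*h + h) - g1 ((k:ℝ)*h))
        = h^2/12 * ∑ k ∈ Finset.range n, (g1 (((k+1:ℕ):ℝ)*h) - g1 ((k:ℝ)*h)) := by
      rw [Finset.mul_sum]
      apply Finset.sum_congr rfl
      intro k _
      rw [cast1 k]
    rw [r1, Finset.sum_range_sub (fun k : ℕ => g1 ((k:ℝ)*h)), hzero, hnh, h1L, h10]
    ring
  -- total identity
  have key : (∫ x in (0:ℝ)..L, g x) - h * ∑ k ∈ Finset.Ico 1 n, g ((k:ℝ) * h)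
      = ∑ k ∈ Finset.range n, E k := by
    rw [hEdef]
    rw [Finset.sum_add_distrib, Finset.sum_sub_distrib, ha, hb, hc]
    ring
  rw [key]
  calc |∑ k ∈ Finset.range n, E k| ≤ ∑ k ∈ Finset.range n, |E k| :=
        Finset.abs_sum_le_sum_abs _ _
    _ ≤ ∑ _k ∈ Finset.range n, (K * h^4 / 12) :=
        Finset.sum_le_sum (fun k hk => hEbound k (Finset.mem_range.1 hk))
    _ = n * (K * h^4 / 12) := by rw [Finset.sum_const, Finset.card_range]; ring
    _ ≤ K * L * h^3 := by
        have e : (n:ℝ) * h^4 = L * h^3 := by rw [← hnh]; ring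
        have p : 0 ≤ K * L * h^3 := by positivity
        nlinarith

/-- Third-order accuracy of the composite two-dimensional trapezoidal rule for
`∫_R u²` when `u` vanishes on the boundary of the rectangle `R = [0,a] × [0,b]`. -/
theorem composite_trapezoid_third_order
    (a b : ℝ) (ha : 0 < a) (hb : 0 < b)
    (u : ℝ × ℝ → ℝ) (U : Set (ℝ × ℝ)) (hU : IsOpen U)
    (hRU : Icc (0:ℝ) a ×ˢ Icc (0:ℝ) b ⊆ U) (hu : ContDiffOn ℝ 4 u U)
    (hbd : ∀ p ∈ frontier (Icc (0:ℝ) a ×ˢ Icc (0:ℝ) b), u p = 0) :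
    ∃ C : ℝ, 0 < C ∧
      ∀ N M : ℕ, 0 < N → 0 < M → b / (a / N) = M →
        |(∫ p in Icc (0:ℝ) a ×ˢ Icc (0:ℝ) b, (u p) ^ 2)
            - (a / N) ^ 2 * ∑ i ∈ Finset.Ico 1 N, ∑ j ∈ Finset.Ico 1 M,
                (u ((i : ℝ) * (a / N), (j : ℝ) * (a / N))) ^ 2|
          ≤ C * (a / N) ^ 3 := by
  set R : Set (ℝ × ℝ) := Icc (0:ℝ) a ×ˢ Icc (0:ℝ) b with hRdef
  set f : ℝ × ℝ → ℝ := fun p => (u p) ^ 2 with hfdef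
  have hRclosed : IsClosed R := isClosed_Icc.prod isClosed_Icc
  have hRcomp : IsCompact R := isCompact_Icc.prod isCompact_Icc
  have hf : ContDiffOn ℝ 4 f U := by
    have := hu.mul hu
    simpa [hfdef, pow_two] using this
  -- derivative functions
  set f1 : ℝ × ℝ → ℝ := fun p => fderiv ℝ f p (1,0) with hf1def
  set f2 : ℝ × ℝ → ℝ := fun p => fderiv ℝ f1 p (1,0) with hf2def
  set f3 : ℝ × ℝ → ℝ := fun p => fderiv ℝ f2 p (1,0) with hf3def
  set e1 : ℝ × ℝ → ℝ := fun p => fderiv ℝ f p (0,1) with he1def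
  set e2 : ℝ × ℝ → ℝ := fun p => fderiv ℝ e1 p (0,1) with he2def
  set e3 : ℝ × ℝ → ℝ := fun p => fderiv ℝ e2 p (0,1) with he3def
  have hf1 : ContDiffOn ℝ 3 f1 U :=
    (hf.fderiv_of_isOpen hU (by norm_num)).clm_apply contDiffOn_const
  have hf2 : ContDiffOn ℝ 2 f2 U :=
    (hf1.fderiv_of_isOpen hU (by norm_num)).clm_apply contDiffOn_const
  have hf3 : ContDiffOn ℝ 1 f3 U :=
    (hf2.fderiv_of_isOpen hU (by norm_num)).clm_apply contDiffOn_const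
  have he1 : ContDiffOn ℝ 3 e1 U :=
    (hf.fderiv_of_isOpen hU (by norm_num)).clm_apply contDiffOn_const
  have he2 : ContDiffOn ℝ 2 e2 U :=
    (he1.fderiv_of_isOpen hU (by norm_num)).clm_apply contDiffOn_const
  have he3 : ContDiffOn ℝ 1 e3 U :=
    (he2.fderiv_of_isOpen hU (by norm_num)).clm_apply contDiffOn_const
  -- slice derivative helpers
  have sliceX : ∀ (F : ℝ×ℝ → ℝ), DifferentiableOn ℝ F U → ∀ (c x : ℝ), (x, c) ∈ U →
      HasDerivAt (fun t => F (t, c)) (fderiv ℝ F (x,c) (1,0)) x := by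
    intro F hF c x hp
    have hd : DifferentiableAt ℝ F (x,c) := hF.differentiableAt (hU.mem_nhds hp)
    have h1 : HasDerivAt (fun t : ℝ => (t, c)) ((1:ℝ), (0:ℝ)) x :=
      HasDerivAt.prodMk (hasDerivAt_id x) (hasDerivAt_const x c)
    exact hd.hasFDerivAt.comp_hasDerivAt x h1
  have sliceY : ∀ (F : ℝ×ℝ → ℝ), DifferentiableOn ℝ F U → ∀ (c y : ℝ), (c, y) ∈ U →
      HasDerivAt (fun t => F (c, t)) (fderiv ℝ F (c,y) (0,1)) y := by
    intro F hF c y hp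
    have hd : DifferentiableAt ℝ F (c,y) := hF.differentiableAt (hU.mem_nhds hp)
    have h1 : HasDerivAt (fun t : ℝ => (c, t)) ((0:ℝ), (1:ℝ)) y :=
      HasDerivAt.prodMk (hasDerivAt_const y c) (hasDerivAt_id y)
    exact hd.hasFDerivAt.comp_hasDerivAt y h1
  -- boundary facts
  have hfr_mem : ∀ p : ℝ × ℝ, p ∈ R → (p.1 = 0 ∨ p.1 = a ∨ p.2 = 0 ∨ p.2 = b) →
      p ∈ frontier R := by
    intro p hp hc
    rw [frontier, hRclosed.closure_eq, hRdef, interior_prod_eq, interior_Icc, interior_Icc]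
    refine ⟨hp, ?_⟩
    simp only [Set.mem_prod, Set.mem_Ioo, not_and_or, not_and, not_lt]
    rcases hc with h|h|h|h
    · exact Or.inl (Or.inl (le_of_eq h))
    · exact Or.inl (Or.inr (le_of_eq h.symm))
    · exact Or.inr (Or.inl (le_of_eq h))
    · exact Or.inr (Or.inr (le_of_eq h.symm))
  have hfrU : frontier R ⊆ U := fun p hp => hRU (hRclosed.frontier_subset hp)
  have hf_bd : ∀ p ∈ frontier R, f p = 0 := by
    intro p hp
    show (u p)^2 = 0
    rw [hbd p hp]; ring
  have hfderiv_bd : ∀ p ∈ frontier R, fderiv ℝ f p = 0 := by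
    intro p hp
    have hd : DifferentiableAt ℝ u p :=
      (hu.differentiableOn (by norm_num)).differentiableAt (hU.mem_nhds (hfrU hp))
    have hm : HasFDerivAt f (u p • fderiv ℝ u p + u p • fderiv ℝ u p) p := by
      have := hd.hasFDerivAt.mul hd.hasFDerivAt
      simpa [hfdef, pow_two, Pi.mul_def] using this
    rw [hm.fderiv, hbd p hp]
    simp
  have hf1_bd : ∀ p ∈ frontier R, f1 p = 0 := by
    intro p hp; show fderiv ℝ f p (1,0) = 0; rw [hfderiv_bd p hp]; simp
  have he1_bd : ∀ p ∈ frontier R, e1 p = 0 := by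
    intro p hp; show fderiv ℝ f p (0,1) = 0; rw [hfderiv_bd p hp]; simp
  -- uniform bound on third derivatives
  obtain ⟨K1, hK1⟩ := hRcomp.exists_bound_of_continuousOn (hf3.continuousOn.mono hRU)
  obtain ⟨K2, hK2⟩ := hRcomp.exists_bound_of_continuousOn (he3.continuousOn.mono hRU)
  set K : ℝ := max (max K1 K2) 1 with hKdef
  have hK1' : ∀ p ∈ R, |f3 p| ≤ K := fun p hp =>
    le_trans (hK1 p hp) (le_trans (le_max_left _ _) (le_max_left _ _))
  have hK2' : ∀ p ∈ R, |e3 p| ≤ K := fun p hp =>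
    le_trans (hK2 p hp) (le_trans (le_max_right _ _) (le_max_left _ _))
  have hKpos : (0:ℝ) < K := lt_of_lt_of_le one_pos (le_max_right _ _)
  -- integrability on R
  have hcont : ContinuousOn f R := hf.continuousOn.mono hRU
  have hInt : IntegrableOn f R volume := hcont.integrableOn_compact hRcomp
  refine ⟨2 * a * b * K, by positivity, ?_⟩
  intro N M hN hM hNM
  set h : ℝ := a / N with hhdef
  have hN' : (0:ℝ) < N := by exact_mod_cast hN
  have hM' : (0:ℝ) < M := by exact_mod_cast hM
  have hh : 0 < h := by positivity
  have hbM : b = M * h := by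
    have := (div_eq_iff (ne_of_gt hh)).1 hNM
    linarith
  have hbM' : b / M = h := by
    rw [hbM]; field_simp
  have hNh : (N:ℝ) * h = a := by rw [hhdef]; field_simp
  -- membership helpers
  have hmemR : ∀ x ∈ Icc (0:ℝ) a, ∀ c ∈ Icc (0:ℝ) b, ((x,c) : ℝ×ℝ) ∈ R :=
    fun x hx c hc => ⟨hx, hc⟩
  have hjh_mem : ∀ j : ℕ, j ∈ Finset.Ico 1 M → (j:ℝ) * h ∈ Icc (0:ℝ) b := by
    intro j hj
    rw [Finset.mem_Ico] at hj
    have h1 : (1:ℝ) ≤ j := by exact_mod_cast hj.1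
    have h2 : (j:ℝ) ≤ M := by exact_mod_cast le_of_lt hj.2
    constructor
    · positivity
    · rw [hbM]; nlinarith
  have hih_mem : ∀ i : ℕ, i ∈ Finset.Ico 1 N → (i:ℝ) * h ∈ Icc (0:ℝ) a := by
    intro i hi
    rw [Finset.mem_Ico] at hi
    have h1 : (1:ℝ) ≤ i := by exact_mod_cast hi.1
    have h2 : (i:ℝ) ≤ N := by exact_mod_cast le_of_lt hi.2
    constructor
    · positivity
    · rw [← hNh]; nlinarith
  -- x-slice trapezoid error at height c (uniform bound)
  have Ex_bound : ∀ c ∈ Icc (0:ℝ) b,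
      |(∫ x in (0:ℝ)..a, f (x, c)) - h * ∑ i ∈ Finset.Ico 1 N, f ((i:ℝ)*h, c)|
        ≤ K * a * h^3 := by
    intro c hc
    have hmemU : ∀ x ∈ Icc (0:ℝ) a, ((x,c) : ℝ×ℝ) ∈ U := fun x hx => hRU (hmemR x hx c hc)
    have := trap1d (fun x => f (x,c)) (fun x => f1 (x,c)) (fun x => f2 (x,c))
      (fun x => f3 (x,c)) a K ha N hN
      (fun x hx => sliceX f (hf.differentiableOn (by norm_num)) c x (hmemU x hx))
      (fun x hx => sliceX f1 (hf1.differentiableOn (by norm_num)) c x (hmemU x hx))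
      (fun x hx => sliceX f2 (hf2.differentiableOn (by norm_num)) c x (hmemU x hx))
      (fun x hx => hK1' (x,c) (hmemR x hx c hc))
      (hf_bd (0,c) (hfr_mem (0,c) (hmemR 0 (by constructor <;> linarith) c hc) (Or.inl rfl)))
      (hf_bd (a,c) (hfr_mem (a,c) (hmemR a (by constructor <;> linarith) c hc) (Or.inr (Or.inl rfl))))
      (hf1_bd (0,c) (hfr_mem (0,c) (hmemR 0 (by constructor <;> linarith) c hc) (Or.inl rfl)))
      (hf1_bd (a,c) (hfr_mem (a,c) (hmemR a (by constructor <;> linarith) c hc) (Or.inr (Or.inl rfl))))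
    calc |(∫ x in (0:ℝ)..a, f (x, c)) - h * ∑ i ∈ Finset.Ico 1 N, f ((i:ℝ)*h, c)|
        ≤ K * a * (a/N)^3 := by rw [hhdef]; exact this
      _ = K * a * h^3 := by rw [hhdef]
  -- y-slice trapezoid error at abscissa c (uniform bound)
  have Ey_bound : ∀ c ∈ Icc (0:ℝ) a,
      |(∫ y in (0:ℝ)..b, f (c, y)) - h * ∑ j ∈ Finset.Ico 1 M, f (c, (j:ℝ)*h)|
        ≤ K * b * h^3 := by
    intro c hc
    have hmemU : ∀ y ∈ Icc (0:ℝ) b, ((c,y) : ℝ×ℝ) ∈ U := fun y hy => hRU (hmemR c hc y hy)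
    have := trap1d (fun y => f (c,y)) (fun y => e1 (c,y)) (fun y => e2 (c,y))
      (fun y => e3 (c,y)) b K hb M hM
      (fun y hy => sliceY f (hf.differentiableOn (by norm_num)) c y (hmemU y hy))
      (fun y hy => sliceY e1 (he1.differentiableOn (by norm_num)) c y (hmemU y hy))
      (fun y hy => sliceY e2 (he2.differentiableOn (by norm_num)) c y (hmemU y hy))
      (fun y hy => hK2' (c,y) (hmemR c hc y hy))
      (hf_bd (c,0) (hfr_mem (c,0) (hmemR c hc 0 (by constructor <;> linarith)) (Or.inr (Or.inr (Or.inl rfl)))))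
      (hf_bd (c,b) (hfr_mem (c,b) (hmemR c hc b (by constructor <;> linarith)) (Or.inr (Or.inr (Or.inr rfl)))))
      (he1_bd (c,0) (hfr_mem (c,0) (hmemR c hc 0 (by constructor <;> linarith)) (Or.inr (Or.inr (Or.inl rfl)))))
      (he1_bd (c,b) (hfr_mem (c,b) (hmemR c hc b (by constructor <;> linarith)) (Or.inr (Or.inr (Or.inr rfl)))))
    rw [hbM'] at this
    exact this
  -- set up the iterated-integral decomposition
  set F : ℝ → ℝ := fun x => ∫ y in (0:ℝ)..b, f (x, y) with hFdef
  set S : ℝ → ℝ := fun x => h * ∑ j ∈ Finset.Ico 1 M, f (x, (j:ℝ)*h) with hSdef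
  have inner_eq : ∀ x : ℝ, (∫ y in Icc (0:ℝ) b, f (x,y)) = F x := by
    intro x
    show _ = ∫ y in (0:ℝ)..b, f (x, y)
    rw [intervalIntegral.integral_of_le hb.le, integral_Icc_eq_integral_Ioc]
  have e0 : (∫ p in R, f p) = ∫ x in Icc (0:ℝ) a, ∫ y in Icc (0:ℝ) b, f (x,y) := by
    rw [hRdef, Measure.volume_eq_prod]
    apply setIntegral_prod
    rw [← Measure.volume_eq_prod]
    exact hRdef ▸ hInt
  have e1' : (∫ p in R, f p) = ∫ x in Icc (0:ℝ) a, F x := by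
    rw [e0]
    exact setIntegral_congr_fun measurableSet_Icc (fun x _ => inner_eq x)
  have e2' : ∫ x in Icc (0:ℝ) a, F x = ∫ x in (0:ℝ)..a, F x := by
    rw [intervalIntegral.integral_of_le ha.le, integral_Icc_eq_integral_Ioc]
  -- integrability of F
  have hprod : Integrable f
      ((volume.restrict (Icc (0:ℝ) a)).prod (volume.restrict (Icc (0:ℝ) b))) := by
    rw [Measure.prod_restrict, ← Measure.volume_eq_prod]
    exact hRdef ▸ hInt
  have hFi : IntegrableOn F (Icc (0:ℝ) a) volume := by
    have h' := hprod.integral_prod_left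
    have heq : (fun x => ∫ y in Icc (0:ℝ) b, f (x,y)) = F := funext inner_eq
    rwa [heq] at h'
  have hFint : IntervalIntegrable F volume 0 a :=
    (intervalIntegrable_iff_integrableOn_Icc_of_le ha.le).2 hFi
  -- continuity and integrability of S and slices
  have hS_slice_cont : ∀ j ∈ Finset.Ico 1 M,
      ContinuousOn (fun x => f (x, (j:ℝ)*h)) (Icc (0:ℝ) a) := by
    intro j hj
    have := ContinuousOn.comp (hf.continuousOn.mono hRU)
      (Continuous.continuousOn (continuous_id.prodMk continuous_const))
      (fun x hx => hmemR x hx _ (hjh_mem j hj))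
    simpa [Function.comp_def] using this
  have hslice_int : ∀ j ∈ Finset.Ico 1 M,
      IntervalIntegrable (fun x => f (x,(j:ℝ)*h)) volume 0 a := by
    intro j hj
    exact ((hS_slice_cont j hj).mono (by rw [Set.uIcc_of_le ha.le])).intervalIntegrable
  have hS_cont : ContinuousOn S (Icc (0:ℝ) a) := by
    rw [hSdef]
    apply ContinuousOn.mul continuousOn_const
    exact continuousOn_finset_sum _ (fun j hj => hS_slice_cont j hj)
  have hS_int : IntervalIntegrable S volume 0 a :=
    (hS_cont.mono (by rw [Set.uIcc_of_le ha.le])).intervalIntegrable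
  -- split the outer integral
  have hsplit : ∫ x in (0:ℝ)..a, F x
      = (∫ x in (0:ℝ)..a, (F x - S x)) + ∫ x in (0:ℝ)..a, S x := by
    rw [intervalIntegral.integral_sub hFint hS_int]; ring
  have intS : ∫ x in (0:ℝ)..a, S x
      = h * ∑ j ∈ Finset.Ico 1 M, (∫ x in (0:ℝ)..a, f (x, (j:ℝ)*h)) := by
    show (∫ x in (0:ℝ)..a, h * ∑ j ∈ Finset.Ico 1 M, f (x, (j:ℝ)*h)) = _
    rw [intervalIntegral.integral_const_mul,
      intervalIntegral.integral_finset_sum (fun j hj => hslice_int j hj)]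
  set Ex : ℕ → ℝ := fun j => (∫ x in (0:ℝ)..a, f (x,(j:ℝ)*h))
      - h * ∑ i ∈ Finset.Ico 1 N, f ((i:ℝ)*h, (j:ℝ)*h) with hExdef
  have key2 : h * ∑ j ∈ Finset.Ico 1 M, (∫ x in (0:ℝ)..a, f (x, (j:ℝ)*h))
      = h * ∑ j ∈ Finset.Ico 1 M, Ex j
        + h^2 * ∑ j ∈ Finset.Ico 1 M, ∑ i ∈ Finset.Ico 1 N, f ((i:ℝ)*h, (j:ℝ)*h) := by
    rw [Finset.mul_sum, Finset.mul_sum, Finset.mul_sum, ← Finset.sum_add_distrib]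
    apply Finset.sum_congr rfl
    intro j hj
    show h * (∫ x in (0:ℝ)..a, f (x, (j:ℝ)*h)) = h * Ex j + h^2 * _
    rw [hExdef]
    ring
  have swap : ∑ i ∈ Finset.Ico 1 N, ∑ j ∈ Finset.Ico 1 M, f ((i:ℝ)*h, (j:ℝ)*h)
      = ∑ j ∈ Finset.Ico 1 M, ∑ i ∈ Finset.Ico 1 N, f ((i:ℝ)*h, (j:ℝ)*h) :=
    Finset.sum_comm
  have total : (∫ p in R, f p)
      - h^2 * ∑ i ∈ Finset.Ico 1 N, ∑ j ∈ Finset.Ico 1 M, f ((i:ℝ)*h, (j:ℝ)*h)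
      = (∫ x in (0:ℝ)..a, (F x - S x)) + h * ∑ j ∈ Finset.Ico 1 M, Ex j := by
    rw [e1', e2', hsplit, intS, key2, swap]
    ring
  -- bounds
  have bd1 : |∫ x in (0:ℝ)..a, (F x - S x)| ≤ K * b * h^3 * a := by
    have hb1 : ∀ x ∈ Set.uIoc (0:ℝ) a, ‖F x - S x‖ ≤ K * b * h^3 := by
      intro x hx
      rw [Set.uIoc_of_le ha.le] at hx
      have hx' : x ∈ Icc (0:ℝ) a := ⟨le_of_lt hx.1, hx.2⟩
      rw [Real.norm_eq_abs]
      exact Ey_bound x hx'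
    have := intervalIntegral.norm_integral_le_of_norm_le_const hb1
    rw [Real.norm_eq_abs, sub_zero, abs_of_pos ha] at this
    linarith
  have bd2 : |h * ∑ j ∈ Finset.Ico 1 M, Ex j| ≤ b * (K * a * h^3) := by
    have hsum : |∑ j ∈ Finset.Ico 1 M, Ex j|
        ≤ ((M - 1 : ℕ) : ℝ) * (K * a * h^3) := by
      calc |∑ j ∈ Finset.Ico 1 M, Ex j| ≤ ∑ j ∈ Finset.Ico 1 M, |Ex j| :=
            Finset.abs_sum_le_sum_abs _ _
        _ ≤ ∑ _j ∈ Finset.Ico 1 M, (K * a * h^3) := by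
            apply Finset.sum_le_sum
            intro j hj
            exact Ex_bound ((j:ℝ)*h) (hjh_mem j hj)
        _ = ((M - 1 : ℕ) : ℝ) * (K * a * h^3) := by
            rw [Finset.sum_const, Nat.card_Ico]
            simp [nsmul_eq_mul]
    have hM1 : ((M - 1 : ℕ) : ℝ) ≤ (M : ℝ) := by
      exact_mod_cast Nat.sub_le M 1
    have hKah : (0:ℝ) ≤ K * a * h^3 := by positivity
    calc |h * ∑ j ∈ Finset.Ico 1 M, Ex j| = h * |∑ j ∈ Finset.Ico 1 M, Ex j| := by
          rw [abs_mul, abs_of_pos hh]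
      _ ≤ h * (((M - 1 : ℕ) : ℝ) * (K * a * h^3)) := by
          apply mul_le_mul_of_nonneg_left hsum (le_of_lt hh)
      _ ≤ h * ((M : ℝ) * (K * a * h^3)) := by
          apply mul_le_mul_of_nonneg_left _ (le_of_lt hh)
          exact mul_le_mul_of_nonneg_right hM1 hKah
      _ = b * (K * a * h^3) := by rw [hbM]; ring
  -- conclude
  have goal_eq : (∫ p in R, (u p)^2)
      - h ^ 2 * ∑ i ∈ Finset.Ico 1 N, ∑ j ∈ Finset.Ico 1 M, (u ((i:ℝ)*h, (j:ℝ)*h))^2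
      = (∫ p in R, f p)
        - h^2 * ∑ i ∈ Finset.Ico 1 N, ∑ j ∈ Finset.Ico 1 M, f ((i:ℝ)*h, (j:ℝ)*h) := rfl
  rw [goal_eq, total]
  calc |(∫ x in (0:ℝ)..a, (F x - S x)) + h * ∑ j ∈ Finset.Ico 1 M, Ex j|
      ≤ |∫ x in (0:ℝ)..a, (F x - S x)| + |h * ∑ j ∈ Finset.Ico 1 M, Ex j| := abs_add_le _ _
    _ ≤ K * b * h^3 * a + b * (K * a * h^3) := add_le_add bd1 bd2
    _ = 2 * a * b * K * h^3 := by ring
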